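/- For every odd prime p and every k ∈ ZMod p with k ≠ 0, the representation ρ_k of the Heisenberg group H_p on ℂ^{ZMod p} is irreducible: the only subspaces of ℂ^{ZMod p} invariant under ρ_k(g) for all g ∈ H_p are the zero subspace and the whole space. -/

import Mathlib

@[ext]
structure Heis (p : ℕ) where
  x : ZMod p
  y : ZMod p
  z : ZMod p

namespace Heis

variable {p : ℕ}

instance : Mul (Heis p) := ⟨fun a b => ⟨a.x + b.x, a.y + b.y, a.z + b.z + a.x * b.y⟩⟩
instance : One (Heis p) := ⟨⟨0, 0, 0⟩⟩
instance : Inv (Heis p) := ⟨fun a => ⟨-a.x, -a.y, a.x * a.y - a.z⟩⟩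

lemma mul_def (a b : Heis p) :
    a * b = ⟨a.x + b.x, a.y + b.y, a.z + b.z + a.x * b.y⟩ := rfl
lemma one_def : (1 : Heis p) = ⟨0, 0, 0⟩ := rfl
lemma inv_def (a : Heis p) : a⁻¹ = ⟨-a.x, -a.y, a.x * a.y - a.z⟩ := rfl

instance instGroup : Group (Heis p) where
  mul_assoc a b c := by ext <;> simp [mul_def] <;> ring
  one_mul a := by ext <;> simp [mul_def, one_def]
  mul_one a := by ext <;> simp [mul_def, one_def]
  inv_mul_cancel a := by ext <;> simp [mul_def, inv_def, one_def]

end Heis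

/-- `ω^v = exp(2πi·v.val/p)` for `v : ZMod p`, where `ω = exp(2πi/p)`. -/
noncomputable def omegaPow (p : ℕ) (v : ZMod p) : ℂ :=
  Complex.exp (2 * Real.pi * Complex.I * (v.val : ℂ) / p)

/-- The degree-`p` representation `ρ_k` of `H_p` (`k ≠ 0`), as a matrix-valued function:
the `(a,b)` entry of `ρ_k(x,y,z)` is `ω^{k(z+ya)}` if `b = a + x`, and `0` otherwise. -/
noncomputable def rho (p : ℕ) (k : ZMod p) (g : Heis p) :
    Matrix (ZMod p) (ZMod p) ℂ :=
  Matrix.of fun a b => if b = a + g.x then omegaPow p (k * (g.z + g.y * a)) else 0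

section aux

set_option linter.unusedSectionVars false

variable (p : ℕ) [NeZero p]

lemma omegaPow_eq' (v : ZMod p) :
    omegaPow p v = Complex.exp (2 * Real.pi * Complex.I / p) ^ v.val := by
  rw [← Complex.exp_nat_mul, omegaPow]
  congr 1
  ring

lemma omegaPow_add' (u v : ZMod p) :
    omegaPow p (u + v) = omegaPow p u * omegaPow p v := by
  have hz : Complex.exp (2 * Real.pi * Complex.I / p) ^ p = 1 :=
    (Complex.isPrimitiveRoot_exp p (NeZero.ne p)).pow_eq_one
  rw [omegaPow_eq', omegaPow_eq', omegaPow_eq', ← pow_add, ZMod.val_add]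
  conv_rhs => rw [← Nat.div_add_mod (u.val + v.val) p]
  rw [pow_add, pow_mul, hz, one_pow, one_mul]

lemma omegaPow_zero' : omegaPow p 0 = 1 := by
  rw [omegaPow_eq', ZMod.val_zero, pow_zero]

lemma omegaPow_ne_one' (c : ZMod p) (hc : c ≠ 0) : omegaPow p c ≠ 1 := by
  rw [omegaPow_eq']
  refine (Complex.isPrimitiveRoot_exp p (NeZero.ne p)).pow_ne_one_of_pos_of_lt ?_ (ZMod.val_lt c)
  exact fun h => hc ((ZMod.val_eq_zero c).mp h)

lemma sum_omegaPow' (c : ZMod p) (hc : c ≠ 0) :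
    ∑ y : ZMod p, omegaPow p (c * y) = 0 := by
  have h : omegaPow p c * ∑ y : ZMod p, omegaPow p (c * y)
      = ∑ y : ZMod p, omegaPow p (c * y) := by
    rw [Finset.mul_sum]
    refine Fintype.sum_equiv (Equiv.addRight 1) _ _ (fun y => ?_)
    rw [← omegaPow_add']
    congr 1
    simp [Equiv.coe_addRight]
    ring
  have h2 : (omegaPow p c - 1) * ∑ y : ZMod p, omegaPow p (c * y) = 0 := by
    rw [sub_mul, one_mul, h, sub_self]
  rcases mul_eq_zero.mp h2 with h3 | h3
  · exact absurd (sub_eq_zero.mp h3) (omegaPow_ne_one' p c hc)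
  · exact h3

lemma rho_mulVec' (k : ZMod p) (g : Heis p) (u : ZMod p → ℂ) (a : ZMod p) :
    (rho p k g).mulVec u a = omegaPow p (k * (g.z + g.y * a)) * u (a + g.x) := by
  simp [rho, Matrix.mulVec, dotProduct, ite_mul, Finset.sum_ite_eq']

end aux

/-- For every odd prime `p` and every `k ∈ ZMod p`, `k ≠ 0`, the
representation `ρ_k` of `H_p` on `ℂ^{ZMod p}` is irreducible: the only subspaces of
`ℂ^{ZMod p}` invariant under `ρ_k(g)` for all `g ∈ H_p` are `⊥` and `⊤`. -/
theorem heisenberg_rho_irreducible (p : ℕ) [NeZero p] (hp : p.Prime) (ho : Odd p)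
    (k : ZMod p) (hk : k ≠ 0) (W : Submodule ℂ (ZMod p → ℂ))
    (hW : ∀ g : Heis p, ∀ v ∈ W, (rho p k g).mulVec v ∈ W) :
    W = ⊥ ∨ W = ⊤ := by
  haveI : Fact p.Prime := ⟨hp⟩
  by_cases hW0 : W = ⊥
  · exact Or.inl hW0
  right
  obtain ⟨v, hvW, hv0⟩ := Submodule.ne_bot_iff W |>.mp hW0
  obtain ⟨a₀, ha₀⟩ : ∃ a, v a ≠ 0 := by
    by_contra h
    push_neg at h
    exact hv0 (funext h)
  -- Step 1: averaged projection lands on a multiple of the basis vector at a₀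
  have heq : (∑ y : ZMod p, omegaPow p (-(k * (y * a₀))) • (rho p k ⟨0, y, 0⟩).mulVec v)
      = fun a => if a = a₀ then (p : ℂ) * v a₀ else 0 := by
    funext a
    have hterm : ∀ y : ZMod p,
        omegaPow p (-(k * (y * a₀))) * ((rho p k ⟨0, y, 0⟩).mulVec v a)
          = omegaPow p ((k * (a - a₀)) * y) * v a := by
      intro y
      rw [rho_mulVec']
      show omegaPow p (-(k * (y * a₀))) * (omegaPow p (k * ((0:ZMod p) + y * a)) * v (a + 0)) = _
      rw [add_zero, ← mul_assoc, ← omegaPow_add']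
      congr 2
      ring
    simp only [Finset.sum_apply, Pi.smul_apply, smul_eq_mul]
    rw [Finset.sum_congr rfl (fun y _ => hterm y), ← Finset.sum_mul]
    by_cases ha : a = a₀
    · subst ha
      simp only [sub_self, mul_zero, zero_mul, omegaPow_zero', if_pos rfl]
      rw [Finset.sum_const, Finset.card_univ, ZMod.card]
      simp
    · rw [if_neg ha, sum_omegaPow' p _ (by
        refine mul_ne_zero hk (sub_ne_zero.mpr ha)), zero_mul]
  have hconst : (fun a => if a = a₀ then (p : ℂ) * v a₀ else 0) ∈ W := by
    rw [← heq]
    exact Submodule.sum_mem _ fun y _ => Submodule.smul_mem _ _ (hW _ v hvW)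
  have hpC : ((p : ℂ) * v a₀) ≠ 0 :=
    mul_ne_zero (Nat.cast_ne_zero.mpr (NeZero.ne p)) ha₀
  have hsingle₀ : (Pi.single a₀ (1 : ℂ) : ZMod p → ℂ) ∈ W := by
    have : (Pi.single a₀ (1 : ℂ) : ZMod p → ℂ)
        = ((p : ℂ) * v a₀)⁻¹ • fun a => if a = a₀ then (p : ℂ) * v a₀ else 0 := by
      funext a
      by_cases ha : a = a₀
      · subst ha
        simp only [Pi.single_eq_same, Pi.smul_apply, if_pos rfl, if_true, smul_eq_mul]
        exact (inv_mul_cancel₀ hpC).symm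
      · simp [Pi.single_eq_of_ne ha, ha]
    rw [this]
    exact Submodule.smul_mem _ _ hconst
  -- Step 2: translate to get all basis vectors
  have hsingle : ∀ b : ZMod p, (Pi.single b (1 : ℂ) : ZMod p → ℂ) ∈ W := by
    intro b
    have : (Pi.single b (1 : ℂ) : ZMod p → ℂ)
        = (rho p k ⟨a₀ - b, 0, 0⟩).mulVec (Pi.single a₀ (1 : ℂ)) := by
      funext a
      rw [rho_mulVec']
      simp only [zero_mul, add_zero, omegaPow_zero', one_mul, mul_zero]
      have hiff : (a + (a₀ - b) = a₀) ↔ a = b :=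
        ⟨fun h => by linear_combination h, fun h => by rw [h]; ring⟩
      simp [Pi.single_apply, hiff]
    rw [this]
    exact hW _ _ hsingle₀
  -- Step 3: conclude
  rw [Submodule.eq_top_iff']
  intro u
  have : u = ∑ b : ZMod p, u b • (Pi.single b (1 : ℂ) : ZMod p → ℂ) := by
    funext a
    simp [Pi.single_apply, Finset.sum_ite_eq']
  rw [this]
  exact Submodule.sum_mem _ fun b _ => Submodule.smul_mem _ _ (hsingle b)
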